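/- Let G be a group with probability measures μ, θ and suppose there exists h ∈ H^∞(G,μ) and g ∈ G with (θ*h)(g) ≠ h(g), where (θ*h)(x) = ∫ h(xy) dθ(y). Then lim inf_{n→∞} (1/n)‖Σ_{i=1}^n (θ*μ^{*i} − μ^{*i})‖_TV > 0. -/
import Mathlib

open MeasureTheory Filter ProbabilityTheory
open scoped ENNReal NNReal

noncomputable def mconv {G : Type*} [Mul G] [MeasurableSpace G] (μ ν : Measure G) : Measure G :=
  (μ.prod ν).map (fun p => p.1 * p.2)

noncomputable def mconvPow {G : Type*} [Monoid G] [MeasurableSpace G] (μ : Measure G) : ℕ → Measure G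
  | 0 => Measure.dirac 1
  | n+1 => mconv (mconvPow μ n) μ

noncomputable def tvDist {α : Type*} [MeasurableSpace α] (μ ν : Measure α) : ℝ :=
  ⨆ A : Set α, |(μ A).toReal - (ν A).toReal|

noncomputable def tildeMeasure {G : Type*} [Monoid G] [MeasurableSpace G] (μ : Measure G) : Measure G :=
  Measure.sum (fun n => ((2:ℝ≥0∞)^(n+1))⁻¹ • mconvPow μ n)

section Aux

variable {α : Type*} [MeasurableSpace α]

lemma tv_abs_le (μ ν : Measure α) [IsFiniteMeasure μ] [IsFiniteMeasure ν] (A : Set α) :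
    |(μ A).toReal - (ν A).toReal| ≤ (μ Set.univ).toReal + (ν Set.univ).toReal := by
  have h1 : (μ A).toReal ≤ (μ Set.univ).toReal :=
    ENNReal.toReal_mono (measure_ne_top _ _) (measure_mono (Set.subset_univ A))
  have h2 : (ν A).toReal ≤ (ν Set.univ).toReal :=
    ENNReal.toReal_mono (measure_ne_top _ _) (measure_mono (Set.subset_univ A))
  have h3 : (0:ℝ) ≤ (μ A).toReal := ENNReal.toReal_nonneg
  have h4 : (0:ℝ) ≤ (ν A).toReal := ENNReal.toReal_nonneg
  rw [abs_le]; constructor <;> linarith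

lemma tv_bdd (μ ν : Measure α) [IsFiniteMeasure μ] [IsFiniteMeasure ν] :
    BddAbove (Set.range fun A : Set α => |(μ A).toReal - (ν A).toReal|) := by
  refine ⟨(μ Set.univ).toReal + (ν Set.univ).toReal, ?_⟩
  rintro x ⟨A, rfl⟩
  exact tv_abs_le μ ν A

lemma tvDist_le (μ ν : Measure α) [IsFiniteMeasure μ] [IsFiniteMeasure ν] :
    tvDist μ ν ≤ (μ Set.univ).toReal + (ν Set.univ).toReal :=
  ciSup_le (tv_abs_le μ ν)

lemma abs_le_tvDist (μ ν : Measure α) [IsFiniteMeasure μ] [IsFiniteMeasure ν] (A : Set α) :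
    |(μ A).toReal - (ν A).toReal| ≤ tvDist μ ν :=
  le_ciSup (tv_bdd μ ν) A

lemma tvDist_nonneg (μ ν : Measure α) [IsFiniteMeasure μ] [IsFiniteMeasure ν] :
    0 ≤ tvDist μ ν :=
  le_trans (abs_nonneg _) (abs_le_tvDist μ ν ∅)

lemma integrable_of_bdd {f : α → ℂ} (hf : Measurable f) {C : ℝ} (hC : ∀ x, ‖f x‖ ≤ C)
    (κ : Measure α) [IsFiniteMeasure κ] : Integrable f κ :=
  Integrable.mono' (integrable_const C) hf.aestronglyMeasurable (ae_of_all _ hC)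

/-- Key bound: `‖∫ f dμ - ∫ f dν‖ ≤ 2 C tvDist`, via Hahn decomposition. -/
lemma norm_integral_sub_le_tv (μ ν : Measure α) [IsFiniteMeasure μ] [IsFiniteMeasure ν]
    {f : α → ℂ} (hf : Measurable f) {C : ℝ} (hC0 : 0 ≤ C) (hC : ∀ x, ‖f x‖ ≤ C) :
    ‖(∫ x, f x ∂μ) - ∫ x, f x ∂ν‖ ≤ 2 * C * tvDist μ ν := by
  obtain ⟨s, hs, h1, h2⟩ := hahn_decomposition (μ := μ) (ν := ν)
  have hle1 : ν.restrict s ≤ μ.restrict s := by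
    refine Measure.le_iff.mpr fun t ht => ?_
    rw [Measure.restrict_apply ht, Measure.restrict_apply ht]
    exact h1 _ (ht.inter hs) Set.inter_subset_right
  have hle2 : μ.restrict sᶜ ≤ ν.restrict sᶜ := by
    refine Measure.le_iff.mpr fun t ht => ?_
    rw [Measure.restrict_apply ht, Measure.restrict_apply ht]
    exact h2 _ (ht.inter hs.compl) Set.inter_subset_right
  set ρ : Measure α := μ.restrict s - ν.restrict s with hρ
  set ρ' : Measure α := ν.restrict sᶜ - μ.restrict sᶜ with hρ'
  have hsum1 : ρ + ν.restrict s = μ.restrict s := Measure.sub_add_cancel_of_le hle1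
  have hsum2 : ρ' + μ.restrict sᶜ = ν.restrict sᶜ := Measure.sub_add_cancel_of_le hle2
  have hμs : ∫ x, f x ∂(μ.restrict s) = (∫ x, f x ∂ρ) + ∫ x, f x ∂(ν.restrict s) := by
    rw [← hsum1, integral_add_measure (integrable_of_bdd hf hC _) (integrable_of_bdd hf hC _)]
  have hνs : ∫ x, f x ∂(ν.restrict sᶜ) = (∫ x, f x ∂ρ') + ∫ x, f x ∂(μ.restrict sᶜ) := by
    rw [← hsum2, integral_add_measure (integrable_of_bdd hf hC _) (integrable_of_bdd hf hC _)]
  have hdecμ : ∫ x, f x ∂μ = (∫ x, f x ∂(μ.restrict s)) + ∫ x, f x ∂(μ.restrict sᶜ) :=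
    (integral_add_compl hs (integrable_of_bdd hf hC μ)).symm
  have hdecν : ∫ x, f x ∂ν = (∫ x, f x ∂(ν.restrict s)) + ∫ x, f x ∂(ν.restrict sᶜ) :=
    (integral_add_compl hs (integrable_of_bdd hf hC ν)).symm
  have key : (∫ x, f x ∂μ) - ∫ x, f x ∂ν = (∫ x, f x ∂ρ) - ∫ x, f x ∂ρ' := by
    rw [hdecμ, hdecν, hμs, hνs]; ring
  have hρ1 : ‖∫ x, f x ∂ρ‖ ≤ C * tvDist μ ν := by
    have hb : ‖∫ x, f x ∂ρ‖ ≤ C * (ρ Set.univ).toReal :=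
      norm_integral_le_of_norm_le_const (ae_of_all _ hC)
    refine hb.trans (mul_le_mul_of_nonneg_left ?_ hC0)
    have hρu : (ρ Set.univ).toReal = (μ s).toReal - (ν s).toReal := by
      rw [hρ, Measure.sub_apply MeasurableSet.univ hle1, Measure.restrict_apply_univ,
        Measure.restrict_apply_univ]
      exact ENNReal.toReal_sub_of_le (h1 s hs subset_rfl) (measure_ne_top μ s)
    rw [hρu]
    exact le_trans (le_abs_self _) (abs_le_tvDist μ ν s)
  have hρ2 : ‖∫ x, f x ∂ρ'‖ ≤ C * tvDist μ ν := by
    have hb : ‖∫ x, f x ∂ρ'‖ ≤ C * (ρ' Set.univ).toReal :=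
      norm_integral_le_of_norm_le_const (ae_of_all _ hC)
    refine hb.trans (mul_le_mul_of_nonneg_left ?_ hC0)
    have hρu : (ρ' Set.univ).toReal = (ν sᶜ).toReal - (μ sᶜ).toReal := by
      rw [hρ', Measure.sub_apply MeasurableSet.univ hle2, Measure.restrict_apply_univ,
        Measure.restrict_apply_univ]
      exact ENNReal.toReal_sub_of_le (h2 sᶜ hs.compl subset_rfl) (measure_ne_top ν sᶜ)
    rw [hρu]
    refine le_trans ?_ (abs_le_tvDist μ ν sᶜ)
    rw [abs_sub_comm]
    exact le_abs_self _
  calc ‖(∫ x, f x ∂μ) - ∫ x, f x ∂ν‖ = ‖(∫ x, f x ∂ρ) - ∫ x, f x ∂ρ'‖ := by rw [key]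
    _ ≤ ‖∫ x, f x ∂ρ‖ + ‖∫ x, f x ∂ρ'‖ := norm_sub_le _ _
    _ ≤ C * tvDist μ ν + C * tvDist μ ν := add_le_add hρ1 hρ2
    _ = 2 * C * tvDist μ ν := by ring

end Aux

section Conv

variable {G : Type*} [Monoid G] [MeasurableSpace G] [MeasurableMul₂ G]

lemma mconv_prob (μ ν : Measure G) [IsProbabilityMeasure μ] [IsProbabilityMeasure ν] :
    IsProbabilityMeasure (mconv μ ν) :=
  Measure.isProbabilityMeasure_map measurable_mul.aemeasurable

lemma mconvPow_prob (μ : Measure G) [IsProbabilityMeasure μ] (n : ℕ) :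
    IsProbabilityMeasure (mconvPow μ n) := by
  induction n with
  | zero => exact Measure.dirac.isProbabilityMeasure
  | succ n ih => exact mconv_prob _ _

lemma integral_mconv (μ ν : Measure G) [IsProbabilityMeasure μ] [IsProbabilityMeasure ν]
    {f : G → ℂ} (hf : Measurable f) {C : ℝ} (hC : ∀ x, ‖f x‖ ≤ C) :
    ∫ x, f x ∂(mconv μ ν) = ∫ a, ∫ b, f (a * b) ∂ν ∂μ := by
  rw [mconv, integral_map measurable_mul.aemeasurable hf.aestronglyMeasurable]
  exact integral_prod _ (integrable_of_bdd (hf.comp measurable_mul) (fun p => hC _) _)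

lemma integral_mconvPow (μ : Measure G) [IsProbabilityMeasure μ]
    {h : G → ℂ} (hmeas : Measurable h) {C : ℝ} (hC : ∀ x, ‖h x‖ ≤ C)
    (hharm : ∀ x, h x = ∫ γ, h (x * γ) ∂μ) :
    ∀ (n : ℕ) (x : G), ∫ y, h (x * y) ∂(mconvPow μ n) = h x := by
  intro n
  induction n with
  | zero =>
    intro x
    have hm : Measurable fun y : G => h (x * y) := by
      exact hmeas.comp (measurable_const_mul x)
    rw [show mconvPow μ 0 = Measure.dirac 1 from rfl,
      integral_dirac' _ 1 hm.stronglyMeasurable, mul_one]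
  | succ n ih =>
    intro x
    haveI := mconvPow_prob μ n
    have hm : Measurable fun y : G => h (x * y) := by
      exact hmeas.comp (measurable_const_mul x)
    rw [show mconvPow μ (n+1) = mconv (mconvPow μ n) μ from rfl,
      integral_mconv _ _ hm (fun y => hC _)]
    have h1 : ∀ a : G, ∫ b, h (x * (a * b)) ∂μ = h (x * a) := by
      intro a
      simp_rw [← mul_assoc]
      exact (hharm (x * a)).symm
    calc ∫ a, ∫ b, h (x * (a * b)) ∂μ ∂(mconvPow μ n)
        = ∫ a, h (x * a) ∂(mconvPow μ n) := integral_congr_ae (ae_of_all _ h1)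
      _ = h x := ih x

end Conv

/-- if some bounded μ-harmonic function is not θ-invariant at some point, then
the Cesàro total-variation averages stay bounded away from 0. -/
theorem stmt18 {G : Type*} [Group G] [MeasurableSpace G] [MeasurableMul₂ G]
    (μ θ : Measure G) [IsProbabilityMeasure μ] [IsProbabilityMeasure θ]
    (h : G → ℂ) (hmeas : Measurable h) (hbdd : ∃ C, ∀ x, ‖h x‖ ≤ C)
    (hharm : ∀ x, h x = ∫ γ, h (x * γ) ∂μ)
    (g : G) (hne : (∫ y, h (g * y) ∂θ) ≠ h g) :
    0 < liminf (fun n : ℕ => (1 / (n : ℝ)) *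
      tvDist (∑ i ∈ Finset.Icc 1 n, mconv θ (mconvPow μ i))
        (∑ i ∈ Finset.Icc 1 n, mconvPow μ i)) atTop := by
  obtain ⟨C, hC⟩ := hbdd
  have hC0 : 0 ≤ C := le_trans (norm_nonneg _) (hC 1)
  haveI : ∀ i, IsProbabilityMeasure (mconvPow μ i) := mconvPow_prob μ
  haveI : ∀ i, IsProbabilityMeasure (mconv θ (mconvPow μ i)) := fun i => mconv_prob _ _
  set f : G → ℂ := fun y => h (g * y) with hf
  have hfmeas : Measurable f := hmeas.comp (measurable_const_mul g)
  have hfC : ∀ x, ‖f x‖ ≤ C := fun x => hC _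
  set δ : ℂ := (∫ y, h (g * y) ∂θ) - h g with hδdef
  have hδ : 0 < ‖δ‖ := norm_pos_iff.mpr (sub_ne_zero.mpr hne)
  have hCpos : 0 < C := by
    by_contra hcon
    push_neg at hcon
    have h1 : ‖∫ y, h (g * y) ∂θ‖ ≤ C * (θ Set.univ).toReal :=
      norm_integral_le_of_norm_le_const (ae_of_all _ fun y => hC _)
    rw [measure_univ, ENNReal.toReal_one, mul_one] at h1
    have h2 : ‖h g‖ ≤ C := hC g
    have := norm_sub_le (∫ y, h (g * y) ∂θ) (h g)
    rw [← hδdef] at this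
    linarith
  set c : ℝ := ‖δ‖ / (2 * C) with hc
  have hcpos : 0 < c := div_pos hδ (by linarith)
  -- the pointwise bound for n ≥ 1
  have hbound : ∀ᶠ n : ℕ in atTop, c ≤ (1 / (n : ℝ)) *
      tvDist (∑ i ∈ Finset.Icc 1 n, mconv θ (mconvPow μ i))
        (∑ i ∈ Finset.Icc 1 n, mconvPow μ i) := by
    filter_upwards [eventually_ge_atTop 1] with n hn
    have hn0 : 0 < (n : ℝ) := by exact_mod_cast hn
    set Sθ := ∑ i ∈ Finset.Icc 1 n, mconv θ (mconvPow μ i) with hSθ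
    set S := ∑ i ∈ Finset.Icc 1 n, mconvPow μ i with hS
    have hpow : ∀ i, ∫ y, f y ∂(mconvPow μ i) = h g := fun i =>
      integral_mconvPow μ hmeas hC hharm i g
    have hconvint : ∀ i : ℕ, ∫ y, f y ∂(mconv θ (mconvPow μ i)) = ∫ y, h (g * y) ∂θ := by
      intro i
      rw [integral_mconv _ _ hfmeas hfC]
      have h1 : ∀ a : G, ∫ b, f (a * b) ∂(mconvPow μ i) = h (g * a) := by
        intro a
        have h2 : ∫ b, h (g * a * b) ∂(mconvPow μ i) = h (g * a) :=
          integral_mconvPow μ hmeas hC hharm i (g * a)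
        calc ∫ b, f (a * b) ∂(mconvPow μ i)
            = ∫ b, h (g * a * b) ∂(mconvPow μ i) := by simp only [hf, mul_assoc]
          _ = h (g * a) := h2
      exact integral_congr_ae (ae_of_all _ h1)
    have hintθ : ∫ y, f y ∂Sθ = (n : ℂ) * ∫ y, h (g * y) ∂θ := by
      rw [hSθ, integral_finset_sum_measure (fun i _ => integrable_of_bdd hfmeas hfC _),
        Finset.sum_congr rfl (fun i _ => hconvint i), Finset.sum_const, Nat.card_Icc]
      simp [nsmul_eq_mul]
    have hintS : ∫ y, f y ∂S = (n : ℂ) * h g := by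
      rw [hS, integral_finset_sum_measure (fun i _ => integrable_of_bdd hfmeas hfC _),
        Finset.sum_congr rfl (fun i _ => hpow i), Finset.sum_const, Nat.card_Icc]
      simp [nsmul_eq_mul]
    have hkey : (n : ℝ) * ‖δ‖ ≤ 2 * C * tvDist Sθ S := by
      have h1 : ‖(∫ y, f y ∂Sθ) - ∫ y, f y ∂S‖ ≤ 2 * C * tvDist Sθ S :=
        norm_integral_sub_le_tv Sθ S hfmeas hC0 hfC
      rw [hintθ, hintS, ← mul_sub, norm_mul, ← hδdef] at h1
      simpa using h1
    have h2C : (0:ℝ) < 2 * C := by linarith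
    rw [hc, div_le_iff₀ h2C, one_div, inv_mul_eq_div, div_mul_eq_mul_div, le_div_iff₀ hn0]
    nlinarith [hkey]
  refine lt_of_lt_of_le hcpos (le_liminf_of_le ?_ hbound)
  refine (Filter.isBoundedUnder_of ⟨2, fun n => ?_⟩).isCoboundedUnder_ge
  rcases Nat.eq_zero_or_pos n with hn | hn
  · subst hn; norm_num
  have hn0 : (0:ℝ) < n := by exact_mod_cast hn
  have hs1 : ((∑ i ∈ Finset.Icc 1 n, mconv θ (mconvPow μ i)) Set.univ).toReal = n := by
    rw [Measure.finset_sum_apply]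
    simp [measure_univ, Finset.sum_const, Nat.card_Icc]
  have hs2 : ((∑ i ∈ Finset.Icc 1 n, mconvPow μ i) Set.univ).toReal = n := by
    rw [Measure.finset_sum_apply]
    simp [measure_univ, Finset.sum_const, Nat.card_Icc]
  have hT := tvDist_le (∑ i ∈ Finset.Icc 1 n, mconv θ (mconvPow μ i))
    (∑ i ∈ Finset.Icc 1 n, mconvPow μ i)
  rw [hs1, hs2] at hT
  calc (1 / (n:ℝ)) * tvDist (∑ i ∈ Finset.Icc 1 n, mconv θ (mconvPow μ i))
        (∑ i ∈ Finset.Icc 1 n, mconvPow μ i)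
      ≤ (1 / (n:ℝ)) * ((n:ℝ) + (n:ℝ)) := by
        exact mul_le_mul_of_nonneg_left hT (by positivity)
    _ = 2 := by field_simp; ring
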